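/- Let K be a finite set and k the rates of an irreducible Markov jump process. For every strictly positive probability distribution μ on K there exists a potential V : K → ℝ such that μ is stationary for the modified rates k_V(x,y) := k(x,y) exp((V(y)-V(x))/2), i.e., ∑_y [k_V(x,y)μ(x) − k_V(y,x)μ(y)] = 0 for all x ∈ K. Moreover V is unique up to an additive constant. -/

import Mathlib

set_option maxHeartbeats 1000000

open Finset

private lemma aux_path_bound {K : Type*} {r : K → K → Prop} {x y : K}
    (h : Relation.TransGen r x y) :
    ∃ n : ℕ, ∀ (W : K → ℝ) (M : ℝ), (∀ a b, r a b → W b ≤ W a + M) → W y ≤ W x + n * M := by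
  induction h with
  | single hxy => exact ⟨1, fun W M hW => by simpa using hW _ _ hxy⟩
  | tail _ hbc ih =>
    obtain ⟨n, hn⟩ := ih
    refine ⟨n + 1, fun W M hW => ?_⟩
    have h1 := hW _ _ hbc
    have h2 := hn W M hW
    push_cast
    linarith

theorem exists_potential_making_stationary {K : Type*} [Fintype K]
    (k : K → K → ℝ) (hk : ∀ x y, 0 ≤ k x y)
    (hirr : ∀ x y : K, x ≠ y → Relation.TransGen (fun a b => 0 < k a b) x y)
    (μ : K → ℝ) (hμpos : ∀ x, 0 < μ x) (hμsum : ∑ x, μ x = 1) :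
    ∃ V : K → ℝ,
      (∀ x, ∑ y, (k x y * Real.exp ((V y - V x) / 2) * μ x
                  - k y x * Real.exp ((V x - V y) / 2) * μ y) = 0) ∧
      ∀ V' : K → ℝ,
        (∀ x, ∑ y, (k x y * Real.exp ((V' y - V' x) / 2) * μ x
                    - k y x * Real.exp ((V' x - V' y) / 2) * μ y) = 0) →
        ∃ c : ℝ, ∀ x, V' x = V x + c := by
  classical
  have hK : Nonempty K := by
    rcases isEmpty_or_nonempty K with h | h
    · rw [Finset.univ_eq_empty, Finset.sum_empty] at hμsum; norm_num at hμsum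
    · exact h
  set a : K → K → ℝ := fun u v => k u v * μ u with ha
  have hapos : ∀ u v, 0 < k u v → 0 < a u v := fun u v h => mul_pos h (hμpos u)
  have hanng : ∀ u v, 0 ≤ a u v := fun u v => mul_nonneg (hk u v) (hμpos u).le
  set F : (K → ℝ) → ℝ := fun W => ∑ u, ∑ v, a u v * Real.exp ((W v - W u) / 2) with hF
  have hFc : Continuous F := by rw [hF]; fun_prop
  have hterm : ∀ (W : K → ℝ) (u v : K), a u v * Real.exp ((W v - W u) / 2) ≤ F W := by
    intro W u v
    have t1 : a u v * Real.exp ((W v - W u) / 2)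
        ≤ ∑ v', a u v' * Real.exp ((W v' - W u) / 2) :=
      Finset.single_le_sum (f := fun v' => a u v' * Real.exp ((W v' - W u) / 2))
        (fun v' _ => mul_nonneg (hanng u v') (Real.exp_pos _).le) (mem_univ v)
    have t2 : ∑ v', a u v' * Real.exp ((W v' - W u) / 2) ≤ F W :=
      Finset.single_le_sum (f := fun u' => ∑ v', a u' v' * Real.exp ((W v' - W u') / 2))
        (fun u' _ => Finset.sum_nonneg fun v' _ =>
          mul_nonneg (hanng u' v') (Real.exp_pos _).le) (mem_univ u)
    linarith
  have hFtrans : ∀ (W : K → ℝ) (c : ℝ), F (fun z => W z - c) = F W := by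
    intro W c
    rw [hF]
    refine Finset.sum_congr rfl fun u _ => Finset.sum_congr rfl fun v _ => ?_
    ring_nf
  set x₀ : K := Classical.arbitrary K with hx₀
  -- the uniform edge bound
  set E : Finset (K × K) := Finset.univ.filter (fun p => 0 < k p.1 p.2) with hE
  set M : ℝ := if hEne : E.Nonempty
      then E.sup' hEne (fun p => 2 * Real.log (F 0 / a p.1 p.2)) else 0 with hM
  have hedge : ∀ (W : K → ℝ), F W ≤ F 0 → ∀ u v, 0 < k u v → W v ≤ W u + M := by
    intro W hW u v huv
    have hauv := hapos u v huv
    have hF0pos : 0 < F 0 := by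
      have := hterm 0 u v
      simp only [Pi.zero_apply, sub_zero, zero_div, Real.exp_zero, mul_one] at this
      linarith
    have h1 : a u v * Real.exp ((W v - W u) / 2) ≤ F 0 := le_trans (hterm W u v) hW
    have h2 : Real.exp ((W v - W u) / 2) ≤ F 0 / a u v := by
      rw [le_div_iff₀ hauv]; linarith [h1]
    have h3 : (W v - W u) / 2 ≤ Real.log (F 0 / a u v) :=
      (Real.le_log_iff_exp_le (div_pos hF0pos hauv)).2 h2
    have hmem : (u, v) ∈ E := by rw [hE]; simp [huv]
    have h4 : 2 * Real.log (F 0 / a u v) ≤ M := by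
      rw [hM, dif_pos ⟨(u, v), hmem⟩]
      exact Finset.le_sup' (fun p => 2 * Real.log (F 0 / a p.1 p.2)) hmem
    linarith
  -- the sublevel set
  set S : Set (K → ℝ) := {W | W x₀ = 0} ∩ {W | F W ≤ F 0} with hS
  have hS0 : (0 : K → ℝ) ∈ S := ⟨rfl, show F 0 ≤ F 0 from le_rfl⟩
  have hScl : IsClosed S :=
    ((isClosed_eq (continuous_apply x₀) continuous_const)).inter
      (isClosed_le hFc continuous_const)
  have hSbd : Bornology.IsBounded S := by
    have hz : ∀ z : K, ∃ C : ℝ, ∀ W ∈ S, |W z| ≤ C := by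
      intro z
      by_cases hzx : z = x₀
      · refine ⟨0, fun W hW => ?_⟩
        have h1 : W x₀ = 0 := hW.1
        rw [hzx, h1]
        simp
      · obtain ⟨n, hn⟩ := aux_path_bound (hirr x₀ z (Ne.symm hzx))
        obtain ⟨m, hm⟩ := aux_path_bound (hirr z x₀ hzx)
        refine ⟨max (n * M) (m * M), fun W hW => ?_⟩
        have hWedge : ∀ p q : K, 0 < k p q → W q ≤ W p + M := hedge W hW.2
        have h1 := hn W M hWedge
        have h2 := hm W M hWedge
        rw [hW.1] at h1 h2
        rw [abs_le]
        constructor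
        · have : m * M ≤ max (n * M) (m * M) := le_max_right _ _
          linarith
        · have : n * M ≤ max (n * M) (m * M) := le_max_left _ _
          linarith
    choose C hC using hz
    refine Bornology.IsBounded.subset (Metric.isBounded_closedBall (x := (0 : K → ℝ))
      (r := ∑ z, |C z|)) ?_
    intro W hW
    rw [Metric.mem_closedBall, dist_zero_right]
    rw [pi_norm_le_iff_of_nonneg (Finset.sum_nonneg fun z _ => abs_nonneg _)]
    intro z
    calc ‖W z‖ = |W z| := rfl
      _ ≤ C z := hC z W hW
      _ ≤ |C z| := le_abs_self _
      _ ≤ ∑ z', |C z'| := Finset.single_le_sum (f := fun z' => |C z'|)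
        (fun z' _ => abs_nonneg _) (mem_univ z)
  have hScomp : IsCompact S := Metric.isCompact_of_isClosed_isBounded hScl hSbd
  obtain ⟨W, hWS, hWmin⟩ := hScomp.exists_isMinOn ⟨0, hS0⟩ hFc.continuousOn
  have hWmin' := isMinOn_iff.1 hWmin
  have hglob : ∀ Y : K → ℝ, F W ≤ F Y := by
    intro Y
    by_cases h : F Y ≤ F 0
    · have hY : (fun z => Y z - Y x₀) ∈ S :=
        ⟨by simp, show F (fun z => Y z - Y x₀) ≤ F 0 by rw [hFtrans]; exact h⟩
      calc F W ≤ F (fun z => Y z - Y x₀) := hWmin' _ hY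
        _ = F Y := hFtrans Y (Y x₀)
    · have := hWmin' _ hS0
      linarith
  -- stationarity
  have hkey : ∀ x : K, ∑ u, a u x * Real.exp ((W x - W u) / 2)
      = ∑ v, a x v * Real.exp ((W v - W x) / 2) := by
    intro x
    set dlt : K → ℝ := fun z => if z = x then (1 : ℝ) else 0 with hdlt
    have hder : HasDerivAt (fun t : ℝ => F (fun z => W z + t * dlt z))
        (∑ u, ∑ v, a u v * (Real.exp ((W v + 0 * dlt v - (W u + 0 * dlt u)) / 2)
          * ((dlt v - dlt u) / 2))) 0 := by
      rw [hF]
      apply HasDerivAt.fun_sum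
      intro u _
      apply HasDerivAt.fun_sum
      intro v _
      have h1 : HasDerivAt (fun t : ℝ => (W v + t * dlt v - (W u + t * dlt u)) / 2)
          ((dlt v - dlt u) / 2) 0 :=
        (((hasDerivAt_mul_const (dlt v)).const_add (W v)).sub
          ((hasDerivAt_mul_const (dlt u)).const_add (W u))).div_const 2
      exact h1.exp.const_mul (a u v)
    have hloc : IsLocalMin (fun t : ℝ => F (fun z => W z + t * dlt z)) 0 := by
      apply Filter.Eventually.of_forall
      intro t
      have h0 : (fun z => W z + (0 : ℝ) * dlt z) = W := by funext z; simp
      simp only [h0]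
      exact hglob _
    have hD := hloc.hasDerivAt_eq_zero hder
    simp only [zero_mul, add_zero] at hD
    have expand : ∀ u v : K,
        a u v * (Real.exp ((W v - W u) / 2) * ((dlt v - dlt u) / 2))
        = (if v = x then a u v * Real.exp ((W v - W u) / 2) / 2 else 0)
          - (if u = x then a u v * Real.exp ((W v - W u) / 2) / 2 else 0) := by
      intro u v
      by_cases hu : u = x <;> by_cases hv : v = x <;> simp [hdlt, hu, hv] <;> ring
    rw [Finset.sum_congr rfl (fun u _ => Finset.sum_congr rfl fun v _ => expand u v)] at hD
    simp only [Finset.sum_sub_distrib] at hD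
    have e1 : ∑ u, ∑ v, (if v = x then a u v * Real.exp ((W v - W u) / 2) / 2 else 0)
        = ∑ u, a u x * Real.exp ((W x - W u) / 2) / 2 := by
      refine Finset.sum_congr rfl fun u _ => ?_
      simp
    have e2 : ∑ u, ∑ v, (if u = x then a u v * Real.exp ((W v - W u) / 2) / 2 else 0)
        = ∑ v, a x v * Real.exp ((W v - W x) / 2) / 2 := by
      rw [Finset.sum_comm]
      refine Finset.sum_congr rfl fun v _ => ?_
      simp
    rw [e1, e2] at hD
    have : ∑ u, a u x * Real.exp ((W x - W u) / 2) / 2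
        = ∑ v, a x v * Real.exp ((W v - W x) / 2) / 2 := by linarith
    rw [← Finset.sum_div, ← Finset.sum_div] at this
    linarith
  refine ⟨W, ?_, ?_⟩
  · intro x
    rw [Finset.sum_sub_distrib]
    have r1 : ∑ y, k x y * Real.exp ((W y - W x) / 2) * μ x
        = ∑ v, a x v * Real.exp ((W v - W x) / 2) :=
      Finset.sum_congr rfl fun y _ => by rw [ha]; ring
    have r2 : ∑ y, k y x * Real.exp ((W x - W y) / 2) * μ y
        = ∑ u, a u x * Real.exp ((W x - W u) / 2) :=
      Finset.sum_congr rfl fun y _ => by rw [ha]; ring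
    rw [r1, r2, ← hkey x, sub_self]
  · -- uniqueness
    intro V' hV'
    set d : K → ℝ := fun z => V' z - W z with hd
    set b : K → K → ℝ := fun u v => a u v * Real.exp ((W v - W u) / 2) with hb
    have hbnn : ∀ u v, 0 ≤ b u v := fun u v => mul_nonneg (hanng u v) (Real.exp_pos _).le
    have hbpos : ∀ u v, 0 < k u v → 0 < b u v := fun u v h =>
      mul_pos (hapos u v h) (Real.exp_pos _)
    have hterm' : ∀ x y : K, k x y * Real.exp ((V' y - V' x) / 2) * μ x
        = b x y * Real.exp ((d y - d x) / 2) := by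
      intro x y
      have hsplit : Real.exp ((V' y - V' x) / 2)
          = Real.exp ((W y - W x) / 2) * Real.exp ((V' y - W y - (V' x - W x)) / 2) := by
        rw [← Real.exp_add]; congr 1; ring
      simp only [hb, hd, ha]
      rw [hsplit]
      ring
    have hV'2 : ∀ x : K, ∑ y, b x y * Real.exp ((d y - d x) / 2)
        = ∑ y, b y x * Real.exp ((d x - d y) / 2) := by
      intro x
      have := hV' x
      rw [Finset.sum_sub_distrib, sub_eq_zero] at this
      calc ∑ y, b x y * Real.exp ((d y - d x) / 2)
          = ∑ y, k x y * Real.exp ((V' y - V' x) / 2) * μ x :=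
            Finset.sum_congr rfl fun y _ => (hterm' x y).symm
        _ = ∑ y, k y x * Real.exp ((V' x - V' y) / 2) * μ y := this
        _ = ∑ y, b y x * Real.exp ((d x - d y) / 2) :=
            Finset.sum_congr rfl fun y _ => hterm' y x
    have hbal : ∀ x : K, ∑ y, b y x = ∑ y, b x y := fun x => hkey x
    clear_value d b
    obtain ⟨xm, _, hmax⟩ := Finset.exists_max_image Finset.univ d univ_nonempty
    have hmax' : ∀ y, d y ≤ d xm := fun y => hmax y (mem_univ y)
    have hstep : ∀ z, d z = d xm → ∀ y, 0 < k z y → d y = d xm := by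
      intro z hz y hky
      have hle : ∀ y', b z y' * Real.exp ((d y' - d z) / 2) ≤ b z y' := by
        intro y'
        have : Real.exp ((d y' - d z) / 2) ≤ 1 := by
          rw [Real.exp_le_one_iff]
          have h1 := hmax' y'
          linarith [hz]
        exact mul_le_of_le_one_right (hbnn z y') this
      have hge : ∑ y', b y' z ≤ ∑ y', b y' z * Real.exp ((d z - d y') / 2) := by
        refine Finset.sum_le_sum fun y' _ => ?_
        refine le_mul_of_one_le_right (hbnn y' z) ?_
        rw [Real.one_le_exp_iff]
        have h1 := hmax' y'
        linarith [hz]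
      have heq : ∑ y', b z y' * Real.exp ((d y' - d z) / 2) = ∑ y', b z y' := by
        refine le_antisymm (Finset.sum_le_sum fun y' _ => hle y') ?_
        calc ∑ y', b z y' = ∑ y', b y' z := (hbal z).symm
          _ ≤ ∑ y', b y' z * Real.exp ((d z - d y') / 2) := hge
          _ = ∑ y', b z y' * Real.exp ((d y' - d z) / 2) := (hV'2 z).symm
      have hzero : ∑ y', (b z y' - b z y' * Real.exp ((d y' - d z) / 2)) = 0 := by
        rw [Finset.sum_sub_distrib, heq, sub_self]
      have := (Finset.sum_eq_zero_iff_of_nonneg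
        (fun y' _ => by linarith [hle y'])).1 hzero y (mem_univ y)
      have hbzy := hbpos z y hky
      have hexp1 : Real.exp ((d y - d z) / 2) = 1 := by
        have h' : b z y * (1 - Real.exp ((d y - d z) / 2)) = 0 := by linarith
        rcases mul_eq_zero.1 h' with h'' | h''
        · linarith
        · linarith
      rw [Real.exp_eq_one_iff] at hexp1
      have hdyz := (div_eq_zero_iff.1 hexp1).resolve_right (by norm_num)
      rw [sub_eq_zero] at hdyz
      rw [hdyz, hz]
    have hall : ∀ z, d z = d xm := by
      intro z
      by_cases hz : z = xm
      · rw [hz]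
      · have htg := hirr xm z (Ne.symm hz)
        clear hz
        induction htg with
        | single h => exact hstep xm rfl _ h
        | tail _ h ih => exact hstep _ ih _ h
    refine ⟨V' xm - W xm, fun x => ?_⟩
    have h1 := hall x
    have h2 := hall xm
    simp only [hd] at h1 h2
    linarith
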